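/- Let g ≥ 1, let 𝐬 : ℝ^g → ℝ^g be the Viète map 𝐬(t) = (e₁(t),…,e_g(t)), and let A_g = {t ∈ (−2,2)^g : t₁ < t₂ < ⋯ < t_g}. For every continuous function φ : ℝ^g → ℝ, ∫_{A_g} φ(𝐬(t)) · ∏_{1≤j<k≤g} (t_k − t_j) dt₁⋯dt_g = ∫_{𝐬(A_g)} φ(v) dv₁⋯dv_g, where the right-hand side is the Lebesgue integral over the open set 𝐬(A_g) ⊂ ℝ^g. -/

import Mathlib

open MeasureTheory

/-- The elementary symmetric polynomial of degree `k` in `g` variables. -/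
def esymm (g k : ℕ) (t : Fin g → ℝ) : ℝ :=
  ∑ s ∈ Finset.univ.powersetCard k, ∏ j ∈ s, t j

/-- The Viète map `𝐬(t) = (e₁(t), …, e_g(t))`. -/
def viete (g : ℕ) (t : Fin g → ℝ) : Fin g → ℝ := fun i => esymm g ((i : ℕ) + 1) t

/-- The fundamental alcove `A_g = {t ∈ (−2,2)^g : t₁ < ⋯ < t_g}`. -/
def alcove (g : ℕ) : Set (Fin g → ℝ) :=
  {t | (∀ j : Fin g, t j ∈ Set.Ioo (-2 : ℝ) 2) ∧ StrictMono t}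

/-- Elementary symmetric polynomial of degree `k` in the variables other than `t j`. -/
def esymmD (g k : ℕ) (j : Fin g) (t : Fin g → ℝ) : ℝ :=
  ∑ s ∈ (Finset.univ.erase j).powersetCard k, ∏ m ∈ s, t m

/-- The Jacobian matrix of the Viète map. -/
noncomputable def jmat (g : ℕ) (t : Fin g → ℝ) : Matrix (Fin g) (Fin g) ℝ :=
  Matrix.of fun i j => esymmD g (i : ℕ) j t

/-- The Jacobian of the Viète map as a continuous linear map. -/
noncomputable def jlin (g : ℕ) (t : Fin g → ℝ) : (Fin g → ℝ) →L[ℝ] (Fin g → ℝ) :=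
  LinearMap.toContinuousLinearMap (Matrix.toLin' (jmat g t))

lemma sum_erase_eq_esymmD (g k : ℕ) (j : Fin g) (t : Fin g → ℝ) :
    ∑ s ∈ (Finset.univ.powersetCard (k+1)).filter (fun s => j ∈ s),
      ∏ m ∈ s.erase j, t m = esymmD g k j t := by
  classical
  unfold esymmD
  refine Finset.sum_nbij' (fun s => s.erase j) (fun s => insert j s) ?_ ?_ ?_ ?_ ?_
  · intro s hs
    simp only [Finset.mem_filter, Finset.mem_powersetCard] at hs ⊢
    refine ⟨fun x hx => ?_, ?_⟩
    · simp only [Finset.mem_erase] at hx ⊢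
      exact ⟨hx.1, Finset.mem_univ _⟩
    · rw [Finset.card_erase_of_mem hs.2, hs.1.2]
      simp
  · intro s hs
    simp only [Finset.mem_powersetCard] at hs
    simp only [Finset.mem_filter, Finset.mem_powersetCard]
    have hj : j ∉ s := fun h => by simpa using hs.1 h
    refine ⟨⟨Finset.subset_univ _, ?_⟩, Finset.mem_insert_self _ _⟩
    rw [Finset.card_insert_of_notMem hj, hs.2]
  · intro s hs
    simp only [Finset.mem_filter] at hs
    exact Finset.insert_erase hs.2
  · intro s hs
    simp only [Finset.mem_powersetCard] at hs
    have hj : j ∉ s := fun h => by simpa using hs.1 h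
    exact Finset.erase_insert hj
  · intro s hs; rfl

lemma hasFDerivAt_viete (g : ℕ) (t : Fin g → ℝ) :
    HasFDerivAt (viete g) (jlin g t) t := by
  classical
  rw [hasFDerivAt_pi']
  intro i
  have h1 : HasFDerivAt (fun x : Fin g → ℝ => esymm g ((i:ℕ)+1) x)
      (∑ s ∈ Finset.univ.powersetCard ((i:ℕ)+1),
        ∑ j ∈ s, (∏ m ∈ s.erase j, t m) •
          (ContinuousLinearMap.proj j : (Fin g → ℝ) →L[ℝ] ℝ)) t := by
    unfold esymm
    exact HasFDerivAt.fun_sum fun s hs =>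
      HasFDerivAt.finset_prod fun j _ => hasFDerivAt_apply j t
  have h2 : (ContinuousLinearMap.proj i).comp (jlin g t)
      = ∑ s ∈ Finset.univ.powersetCard ((i:ℕ)+1),
        ∑ j ∈ s, (∏ m ∈ s.erase j, t m) •
          (ContinuousLinearMap.proj j : (Fin g → ℝ) →L[ℝ] ℝ) := by
    ext v
    simp only [ContinuousLinearMap.comp_apply, ContinuousLinearMap.proj_apply,
      ContinuousLinearMap.coe_sum', Finset.sum_apply, ContinuousLinearMap.coe_smul',
      Pi.smul_apply, smul_eq_mul, jlin, LinearMap.coe_toContinuousLinearMap',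
      Matrix.toLin'_apply, Matrix.mulVec, dotProduct]
    show ∑ j, jmat g t i j * v j = _
    have swap : ∑ s ∈ Finset.univ.powersetCard ((i:ℕ)+1),
        ∑ j ∈ s, (∏ m ∈ s.erase j, t m) * v j
        = ∑ j : Fin g, ∑ s ∈ (Finset.univ.powersetCard ((i:ℕ)+1)).filter
            (fun s => j ∈ s), (∏ m ∈ s.erase j, t m) * v j :=
      Finset.sum_comm' (t := fun s => s)
        (t' := (Finset.univ : Finset (Fin g)))
        (s' := fun j => (Finset.univ.powersetCard ((i:ℕ)+1)).filter (fun s => j ∈ s))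
        (fun s j => by
          simp only [Finset.mem_filter, Finset.mem_univ, true_and, and_true])
    rw [swap]
    refine Finset.sum_congr rfl fun j _ => ?_
    rw [← Finset.sum_mul, sum_erase_eq_esymmD]
    rfl
  rw [h2]
  exact h1

lemma prod_eval (g : ℕ) (i : Fin g) (t : Fin g → ℝ) (x : ℝ) :
    ∏ j ∈ Finset.univ.erase i, (x - t j)
      = ∑ k ∈ Finset.range g, (-1:ℝ)^k * esymmD g k i t * x^(g-1-k) := by
  classical
  have hg : 1 ≤ g := i.pos
  set M : Multiset ℝ := (Finset.univ.erase i).val.map t with hM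
  have hcard : Multiset.card M = g - 1 := by
    simp [hM, Finset.card_erase_of_mem]
  have h := congrArg (Polynomial.eval x) (Multiset.prod_X_sub_X_eq_sum_esymm M)
  rw [hcard] at h
  have hg1 : g - 1 + 1 = g := Nat.succ_pred_eq_of_pos hg
  rw [hg1] at h
  have hlhs : Polynomial.eval x (Multiset.map
      (fun t => Polynomial.X - Polynomial.C t) M).prod
      = ∏ j ∈ Finset.univ.erase i, (x - t j) := by
    rw [Polynomial.eval_multiset_prod, hM, Multiset.map_map, Multiset.map_map,
      Finset.prod_eq_multiset_prod]
    refine congrArg Multiset.prod (Multiset.map_congr rfl fun j hj => ?_)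
    simp
  have hesymm : ∀ k, M.esymm k = esymmD g k i t := by
    intro k
    rw [hM, Finset.esymm_map_val]
    rfl
  rw [hlhs] at h
  rw [h]
  rw [Polynomial.eval_finset_sum]
  refine Finset.sum_congr rfl fun k hk => ?_
  simp [hesymm]
  ring

lemma jmat_mul (g : ℕ) (t : Fin g → ℝ) :
    (Matrix.of fun m k : Fin g => t m ^ (g - 1 - (k:ℕ))) *
      (Matrix.of fun k i : Fin g => (-1:ℝ)^(k:ℕ) * jmat g t k i)
      = Matrix.of fun m i : Fin g => ∏ j ∈ Finset.univ.erase i, (t m - t j) := by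
  classical
  ext m i
  simp only [Matrix.mul_apply, Matrix.of_apply]
  rw [prod_eval g i t (t m)]
  rw [← Fin.sum_univ_eq_sum_range (fun k => (-1:ℝ)^k * esymmD g k i t * (t m)^(g-1-k)) g]
  refine Finset.sum_congr rfl fun k _ => ?_
  show t m ^ (g - 1 - (k:ℕ)) * ((-1:ℝ)^(k:ℕ) * jmat g t k i) = _
  rw [jmat]
  simp only [Matrix.of_apply]
  ring

lemma erase_eq_Iio_union_Ioi (g : ℕ) (i : Fin g) :
    Finset.univ.erase i = Finset.Iio i ∪ Finset.Ioi i := by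
  ext j
  simp only [Finset.mem_erase, Finset.mem_univ, and_true, Finset.mem_union,
    Finset.mem_Iio, Finset.mem_Ioi]
  exact ⟨fun h => Ne.lt_or_gt h, fun h => h.elim ne_of_lt ne_of_gt⟩

lemma abs_det_jmat (g : ℕ) (t : Fin g → ℝ) (ht : StrictMono t) :
    |(jmat g t).det| = ∏ j : Fin g, ∏ k ∈ Finset.Ioi j, (t k - t j) := by
  classical
  set V : ℝ := ∏ j : Fin g, ∏ k ∈ Finset.Ioi j, (t k - t j) with hV
  have hVpos : 0 < V := by
    refine Finset.prod_pos fun j _ => Finset.prod_pos fun k hk => ?_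
    exact sub_pos.2 (ht (Finset.mem_Ioi.1 hk))
  set A : Matrix (Fin g) (Fin g) ℝ := Matrix.of fun m k : Fin g => t m ^ (g - 1 - (k:ℕ))
  set J' : Matrix (Fin g) (Fin g) ℝ :=
    Matrix.of fun k i : Fin g => (-1:ℝ)^(k:ℕ) * jmat g t k i
  -- |det A| = V
  have hA : A = (Matrix.vandermonde t).submatrix id Fin.rev := by
    ext m k
    simp only [A, Matrix.of_apply, Matrix.submatrix_apply, Matrix.vandermonde,
      Matrix.of_apply, id_eq, Fin.val_rev]
    congr 1
    omega
  have hAdet : |A.det| = V := by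
    rw [hA]
    have : Fin.rev = ⇑(Fin.revPerm (n := g)) := rfl
    rw [this, Matrix.det_permute' Fin.revPerm (Matrix.vandermonde t)]
    rw [abs_mul, Matrix.det_vandermonde]
    rcases Int.units_eq_one_or (Equiv.Perm.sign (Fin.revPerm (n := g))) with h | h <;>
      simp [h, hV, abs_of_pos hVpos] <;> exact hVpos.le
  -- |det J'| = |det (jmat g t)|
  have hJ' : J' = Matrix.diagonal (fun k : Fin g => (-1:ℝ)^(k:ℕ)) * jmat g t := by
    ext k i
    simp [J', Matrix.diagonal_mul]
  have hJ'det : |J'.det| = |(jmat g t).det| := by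
    rw [hJ', Matrix.det_mul, Matrix.det_diagonal, abs_mul]
    have : |∏ k : Fin g, (-1:ℝ)^(k:ℕ)| = 1 := by
      rw [Finset.abs_prod]
      simp [abs_pow]
    rw [this, one_mul]
  -- det (A * J') = prod of diagonal entries
  have hdiag : A * J' = Matrix.diagonal
      (fun i : Fin g => ∏ j ∈ Finset.univ.erase i, (t i - t j)) := by
    rw [jmat_mul]
    ext m i
    by_cases h : m = i
    · subst h; simp
    · simp only [Matrix.of_apply, Matrix.diagonal_apply_ne _ h]
      apply Finset.prod_eq_zero (i := m)
      · simp [h]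
      · simp
  have hprod : ∏ i : Fin g, |∏ j ∈ Finset.univ.erase i, (t i - t j)| = V * V := by
    have hsplit : ∀ i : Fin g, |∏ j ∈ Finset.univ.erase i, (t i - t j)|
        = (∏ j ∈ Finset.Iio i, (t i - t j)) * ∏ j ∈ Finset.Ioi i, (t j - t i) := by
      intro i
      rw [erase_eq_Iio_union_Ioi, Finset.prod_union (by
        simp [Finset.disjoint_left]
        intro a ha; omega)]
      rw [abs_mul, Finset.abs_prod, Finset.abs_prod]
      congr 1
      · exact Finset.prod_congr rfl fun j hj =>
          abs_of_pos (sub_pos.2 (ht (Finset.mem_Iio.1 hj)))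
      · refine Finset.prod_congr rfl fun j hj => ?_
        rw [abs_sub_comm]
        exact abs_of_pos (sub_pos.2 (ht (Finset.mem_Ioi.1 hj)))
    simp_rw [hsplit]
    rw [Finset.prod_mul_distrib]
    congr 1
    · rw [Finset.prod_comm' (t' := (Finset.univ : Finset (Fin g)))
        (s' := fun j => Finset.Ioi j) (by
          intro i j
          simp [Finset.mem_Iio, Finset.mem_Ioi])]
  -- combine
  have h1 : |A.det| * |(jmat g t).det| = V * V := by
    rw [← hJ'det, ← abs_mul, ← Matrix.det_mul, hdiag, Matrix.det_diagonal,
      Finset.abs_prod, hprod]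
  rw [hAdet] at h1
  exact mul_left_cancel₀ (ne_of_gt hVpos) h1

lemma viete_injOn (g : ℕ) : Set.InjOn (viete g) {t | StrictMono t} := by
  classical
  intro a ha b hb hab
  have hesymm : ∀ k ∈ Finset.range (g+1),
      (Multiset.map a Finset.univ.val).esymm k
        = (Multiset.map b Finset.univ.val).esymm k := by
    intro k hk
    rw [Finset.esymm_map_val, Finset.esymm_map_val]
    rcases Nat.eq_zero_or_pos k with rfl | hkpos
    · simp
    · obtain ⟨j, rfl⟩ := Nat.exists_eq_succ_of_ne_zero (Nat.pos_iff_ne_zero.mp hkpos)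
      have hj : j < g := by
        simp only [Finset.mem_range] at hk; omega
      have := congrFun hab ⟨j, hj⟩
      simpa [viete, esymm] using this
  have hpoly : (Multiset.map (fun r => Polynomial.X - Polynomial.C r)
        (Multiset.map a Finset.univ.val)).prod
      = (Multiset.map (fun r => Polynomial.X - Polynomial.C r)
        (Multiset.map b Finset.univ.val)).prod := by
    rw [Multiset.prod_X_sub_X_eq_sum_esymm, Multiset.prod_X_sub_X_eq_sum_esymm]
    have hca : Multiset.card (Multiset.map a Finset.univ.val) = g := by simp
    have hcb : Multiset.card (Multiset.map b Finset.univ.val) = g := by simp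
    rw [hca, hcb]
    refine Finset.sum_congr rfl fun j hj => ?_
    rw [hesymm j hj]
  have hmult : Multiset.map a Finset.univ.val = Multiset.map b Finset.univ.val := by
    have := congrArg Polynomial.roots hpoly
    rwa [Polynomial.roots_multiset_prod_X_sub_C,
      Polynomial.roots_multiset_prod_X_sub_C] at this
  have hcoe : ∀ c : Fin g → ℝ, Multiset.map c Finset.univ.val
      = ((List.ofFn c : List ℝ) : Multiset ℝ) := by
    intro c; simp [List.ofFn_eq_map, Fin.univ_def]
  rw [hcoe a, hcoe b, Multiset.coe_eq_coe] at hmult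
  have hla : (List.ofFn a).Pairwise (· ≤ ·) :=
    List.pairwise_ofFn.mpr fun i j hij => (ha hij).le
  have hlb : (List.ofFn b).Pairwise (· ≤ ·) :=
    List.pairwise_ofFn.mpr fun i j hij => (hb hij).le
  exact List.ofFn_injective (List.Perm.eq_of_pairwise' hla hlb hmult)

lemma measurableSet_alcove (g : ℕ) : MeasurableSet (alcove g) := by
  have h1 : alcove g = (⋂ j : Fin g, {t : Fin g → ℝ | t j ∈ Set.Ioo (-2:ℝ) 2}) ∩
      (⋂ (i : Fin g) (j : Fin g) (_ : i < j), {t : Fin g → ℝ | t i < t j}) := by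
    ext t
    simp only [alcove, Set.mem_setOf_eq, Set.mem_inter_iff, Set.mem_iInter]
    constructor
    · rintro ⟨h1, h2⟩
      exact ⟨h1, fun i j hij => h2 hij⟩
    · rintro ⟨h1, h2⟩
      exact ⟨h1, fun i j hij => h2 i j hij⟩
  rw [h1]
  refine MeasurableSet.inter ?_ ?_
  · exact MeasurableSet.iInter fun j =>
      (measurable_pi_apply j) measurableSet_Ioo
  · exact MeasurableSet.iInter fun i => MeasurableSet.iInter fun j =>
      MeasurableSet.iInter fun _ =>
        measurableSet_lt (measurable_pi_apply i) (measurable_pi_apply j)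

/-- Change of variables along the Viète map on the fundamental alcove:
`∫_{A_g} φ(𝐬(t)) ∏_{j<k}(t_k − t_j) dt = ∫_{𝐬(A_g)} φ(v) dv`. -/
theorem integral_viete_change_of_variables (g : ℕ) (hg : 1 ≤ g)
    (φ : (Fin g → ℝ) → ℝ) (hφ : Continuous φ) :
    ∫ t in alcove g,
        φ (viete g t) * ∏ j : Fin g, ∏ k ∈ Finset.Ioi j, (t k - t j)
      = ∫ v in viete g '' alcove g, φ v := by
  classical
  have hs := measurableSet_alcove g
  have hf' : ∀ x ∈ alcove g, HasFDerivWithinAt (viete g) (jlin g x) (alcove g) x :=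
    fun x _ => (hasFDerivAt_viete g x).hasFDerivWithinAt
  have hinj : Set.InjOn (viete g) (alcove g) :=
    (viete_injOn g).mono fun t ht => ht.2
  rw [integral_image_eq_integral_abs_det_fderiv_smul volume hs hf' hinj φ]
  refine setIntegral_congr_fun hs fun t ht => ?_
  have hdet : (jlin g t).det = (jmat g t).det := by
    rw [jlin, ContinuousLinearMap.det, LinearMap.coe_toContinuousLinearMap,
      LinearMap.det_toLin']
  rw [hdet, abs_det_jmat g t ht.2, smul_eq_mul, mul_comm]
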